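/- For every ISAC network, the maximum free-communication throughput f̃ := max{f : (s*, f) ∈ R}, where s* = Σ_{u ∈ U(A)} c_u is the maximum sensing fidelity, equals the maximum of Σ_{j:(T_x,j)∈E} f_{(T_x,j)} over all families of nonnegative reals (f_e)_{e ∈ E} satisfying: f_e = 0 for every e ∈ E(A); f_{(i,j)} + f_{(j,i)} ≤ c_{{i,j}} for every undirected link {i,j}; f_{(i,T_x)} = 0 whenever (i,T_x) ∈ E; f_{(R_x,j)} = 0 whenever (R_x,j) ∈ E; and flow conservation at every node other than T_x and R_x. -/

import Mathlib

/-- An ISAC network on a finite node type `V`: a symmetric, irreflexive set of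
directed links `E`, a source `Tx`, a sink `Rx`, a nonnegative capacity `c` on
undirected links (unordered pairs), and a sensing region `A`. -/
structure ISACNetwork (V : Type) [Fintype V] [DecidableEq V] where
  E : Finset (V × V)
  symm : ∀ i j : V, (i, j) ∈ E → (j, i) ∈ E
  irrefl : ∀ i : V, (i, i) ∉ E
  Tx : V
  Rx : V
  TxNeRx : Tx ≠ Rx
  c : Sym2 V → ℝ
  c_nonneg : ∀ u : Sym2 V, 0 ≤ c u
  A : Finset V

namespace ISACNetwork

variable {V : Type} [Fintype V] [DecidableEq V]

/-- `E(A)`: directed links with both endpoints in the sensing region. -/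
def EA (N : ISACNetwork V) : Finset (V × V) :=
  N.E.filter fun e => e.1 ∈ N.A ∧ e.2 ∈ N.A

/-- `U(A)`: undirected links with both endpoints in the sensing region. -/
def UA (N : ISACNetwork V) : Finset (Sym2 V) :=
  N.EA.image (Function.uncurry Sym2.mk)

/-- A valid assignment of communication rates `f` and sensing rates `s`:
nonnegative rates for which there is a nonnegative capacity split `ca` of the
undirected link capacities with `f e + s e ≤ ca e` on each directed link, no
communication into the source or out of the sink, and flow conservation at
every intermediate node. -/
def Valid (N : ISACNetwork V) (f s : V × V → ℝ) : Prop :=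
  (∀ e ∈ N.E, 0 ≤ f e) ∧ (∀ e ∈ N.E, 0 ≤ s e) ∧
  ∃ ca : V × V → ℝ,
    (∀ e ∈ N.E, 0 ≤ ca e) ∧
    (∀ i j : V, (i, j) ∈ N.E → ca (i, j) + ca (j, i) = N.c (Sym2.mk i j)) ∧
    (∀ e ∈ N.E, f e + s e ≤ ca e) ∧
    (∀ i : V, (i, N.Tx) ∈ N.E → f (i, N.Tx) = 0) ∧
    (∀ j : V, (N.Rx, j) ∈ N.E → f (N.Rx, j) = 0) ∧
    (∀ j : V, j ≠ N.Tx → j ≠ N.Rx →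
      ∑ i ∈ Finset.univ.filter (fun i => (i, j) ∈ N.E), f (i, j)
        = ∑ k ∈ Finset.univ.filter (fun k => (j, k) ∈ N.E), f (j, k))

/-- The sensing fidelity achieved by a sensing-rate assignment. -/
def sensOf (N : ISACNetwork V) (s : V × V → ℝ) : ℝ := ∑ e ∈ N.EA, s e

/-- The throughput achieved by a communication-rate assignment. -/
def flowOf (N : ISACNetwork V) (f : V × V → ℝ) : ℝ :=
  ∑ j ∈ Finset.univ.filter (fun j => (N.Tx, j) ∈ N.E), f (N.Tx, j)

/-- The sensing–throughput region: all pairs `(s, f)` achieved by a valid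
assignment. -/
def Region (N : ISACNetwork V) : Set (ℝ × ℝ) :=
  { p | ∃ fr sr : V × V → ℝ, N.Valid fr sr ∧ N.sensOf sr = p.1 ∧ N.flowOf fr = p.2 }

lemma EA_symm (N : ISACNetwork V) {i j : V} (h : (i, j) ∈ N.EA) :
    (j, i) ∈ N.EA := by
  simp only [EA, Finset.mem_filter] at h ⊢
  exact ⟨N.symm i j h.1, h.2.2, h.2.1⟩

lemma EA_subset (N : ISACNetwork V) {e : V × V} (h : e ∈ N.EA) : e ∈ N.E :=
  (Finset.mem_filter.mp h).1

lemma EA_ne (N : ISACNetwork V) {i j : V} (h : (i, j) ∈ N.EA) : i ≠ j := by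
  rintro rfl; exact N.irrefl i (N.EA_subset h)

/-- Pairing lemma: summing a capacity split over the directed links of the
sensing region gives the total undirected capacity of the region. -/
lemma sum_EA_eq_sum_UA (N : ISACNetwork V) (g : V × V → ℝ)
    (hg : ∀ i j : V, (i, j) ∈ N.E → g (i, j) + g (j, i) = N.c (Sym2.mk i j)) :
    ∑ e ∈ N.EA, g e = ∑ u ∈ N.UA, N.c u := by
  rw [← Finset.sum_fiberwise_of_maps_to (g := Function.uncurry Sym2.mk) (t := N.UA)
      (fun e he => Finset.mem_image_of_mem _ he) g]
  refine Finset.sum_congr rfl ?_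
  intro u hu
  obtain ⟨⟨i, j⟩, hij, rfl⟩ := Finset.mem_image.mp hu
  have hne : i ≠ j := N.EA_ne hij
  have hfib : N.EA.filter (fun e => Function.uncurry Sym2.mk e = Function.uncurry Sym2.mk (i, j)) = {(i, j), (j, i)} := by
    refine Finset.ext fun ⟨a, b⟩ => ?_
    rw [Finset.mem_filter]
    simp only [Finset.mem_filter, Finset.mem_insert, Finset.mem_singleton,
      Prod.mk.injEq, Function.uncurry_apply_pair, Sym2.eq_iff]
    constructor
    · rintro ⟨_, (⟨rfl, rfl⟩ | ⟨rfl, rfl⟩)⟩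
      · exact Or.inl ⟨rfl, rfl⟩
      · exact Or.inr ⟨rfl, rfl⟩
    · rintro (⟨rfl, rfl⟩ | ⟨rfl, rfl⟩)
      · exact ⟨hij, Or.inl ⟨rfl, rfl⟩⟩
      · exact ⟨N.EA_symm hij, Or.inr ⟨rfl, rfl⟩⟩
  rw [hfib, Finset.sum_pair (by simp [hne, hne.symm])]
  exact hg i j (N.EA_subset hij)

end ISACNetwork

/-- The maximum free-communication throughput `f̃ = max{f : (s*, f) ∈ R}`
equals the optimal value of the linear program that maximizes the throughput
over nonnegative communication rates vanishing on `E(A)`, respecting the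
undirected link capacities, with no communication into the source or out of
the sink, and conserving flow at intermediate nodes. -/
theorem free_communication_lp {V : Type} [Fintype V] [DecidableEq V]
    (N : ISACNetwork V) (ftil : ℝ)
    (hftil : IsGreatest
      {f : ℝ | (∑ u ∈ N.UA, N.c u, f) ∈ N.Region} ftil) :
    IsGreatest
      {f : ℝ | ∃ fr : V × V → ℝ,
        (∀ e ∈ N.E, 0 ≤ fr e) ∧
        (∀ e ∈ N.EA, fr e = 0) ∧
        (∀ i j : V, (i, j) ∈ N.E → fr (i, j) + fr (j, i) ≤ N.c (Sym2.mk i j)) ∧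
        (∀ i : V, (i, N.Tx) ∈ N.E → fr (i, N.Tx) = 0) ∧
        (∀ j : V, (N.Rx, j) ∈ N.E → fr (N.Rx, j) = 0) ∧
        (∀ j : V, j ≠ N.Tx → j ≠ N.Rx →
          ∑ i ∈ Finset.univ.filter (fun i => (i, j) ∈ N.E), fr (i, j)
            = ∑ k ∈ Finset.univ.filter (fun k => (j, k) ∈ N.E), fr (j, k)) ∧
        N.flowOf fr = f} ftil := by
  obtain ⟨hmem, hub⟩ := hftil
  constructor
  · -- `ftil` is attained by the LP: the communication rates of a valid
    -- assignment achieving full sensing fidelity already vanish on `E(A)`.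
    obtain ⟨fr, sr, ⟨hf0, hs0, ca, hca0, hcsum, hfs, hin, hout, hcons⟩, hsens, hflow⟩ := hmem
    have hca_sum : ∑ e ∈ N.EA, ca e = ∑ u ∈ N.UA, N.c u :=
      N.sum_EA_eq_sum_UA ca hcsum
    have hfrEA : ∀ e ∈ N.EA, fr e = 0 := by
      have h1 : ∑ e ∈ N.EA, (fr e + sr e) ≤ ∑ e ∈ N.EA, ca e :=
        Finset.sum_le_sum fun e he => hfs e (N.EA_subset he)
      rw [Finset.sum_add_distrib] at h1
      have hsr : ∑ e ∈ N.EA, sr e = ∑ u ∈ N.UA, N.c u := hsens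
      have h2 : ∑ e ∈ N.EA, fr e ≤ 0 := by linarith [hca_sum ▸ hsr ▸ h1]
      have h3 : ∑ e ∈ N.EA, fr e = 0 :=
        le_antisymm h2 (Finset.sum_nonneg fun e he => hf0 e (N.EA_subset he))
      intro e he
      exact (Finset.sum_eq_zero_iff_of_nonneg
        (fun e he => hf0 e (N.EA_subset he))).mp h3 e he
    refine ⟨fr, hf0, hfrEA, ?_, hin, hout, hcons, hflow⟩
    intro i j hij
    have hji := N.symm i j hij
    have h1 := hfs (i, j) hij
    have h2 := hfs (j, i) hji
    have := hs0 (i, j) hij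
    have := hs0 (j, i) hji
    have := hcsum i j hij
    linarith
  · -- Every LP-feasible throughput is achieved together with full fidelity.
    rintro f ⟨fr, hf0, hEA, hcap, hin, hout, hcons, hflow⟩
    apply hub
    set ca : V × V → ℝ := fun e =>
      fr e + (N.c (Sym2.mk e.1 e.2) - fr e - fr e.swap) / 2 with hca_def
    have hslack : ∀ i j : V, (i, j) ∈ N.E →
        0 ≤ (N.c (Sym2.mk i j) - fr (i, j) - fr (j, i)) / 2 := by
      intro i j h
      have := hcap i j h
      linarith
    have hcasum : ∀ i j : V, (i, j) ∈ N.E →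
        ca (i, j) + ca (j, i) = N.c (Sym2.mk i j) := by
      intro i j h
      have hsw : (Sym2.mk j i : Sym2 V) = Sym2.mk i j := Sym2.eq_swap
      simp only [hca_def, Prod.swap, hsw]
      ring
    refine ⟨fr, fun e => if e ∈ N.EA then ca e else 0,
      ⟨hf0, ?_, ca, ?_, hcasum, ?_, hin, hout, hcons⟩, ?_, hflow⟩
    · intro e he
      by_cases h : e ∈ N.EA
      · simp only [h, if_true]
        obtain ⟨i, j⟩ := e
        have h1 := hf0 (i, j) he
        have h2 := hslack i j he
        simp only [hca_def, Prod.swap_prod_mk]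
        positivity
      · simp [h]
    · intro e he
      obtain ⟨i, j⟩ := e
      have h1 := hf0 (i, j) he
      have h2 := hslack i j he
      simp only [hca_def]
      positivity
    · intro e he
      by_cases h : e ∈ N.EA
      · simp only [h, if_true]
        have : fr e = 0 := hEA e h
        linarith
      · simp only [h, if_false]
        obtain ⟨i, j⟩ := e
        have h2 := hslack i j he
        simp only [hca_def, Prod.swap_prod_mk]
        linarith
    · show (∑ e ∈ N.EA, if e ∈ N.EA then ca e else 0) = _
      rw [Finset.sum_congr rfl (fun e he => if_pos he)]
      exact N.sum_EA_eq_sum_UA ca hcasum
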